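/- Let k ≥ 0 be an integer and let q be a real root of the Euler–Frobenius polynomial E_k (so in particular q ≠ 1, since all roots of E_k are negative). Then Σ_{i=1}^{k+1} Δ^i 0^{k+1} / (q−1)^i = 0. -/

import Mathlib

open Finset Function
open scoped fwdDiff

/-- Coefficient `a_s^{(k)}` of the Euler–Frobenius polynomial `E_k`. -/
noncomputable def efCoeff (k s : ℕ) : ℝ :=
  ∑ j ∈ Finset.range (s + 1),
    (-1 : ℝ) ^ j * (Nat.choose (k + 2) j : ℝ) * ((s + 1 - j : ℕ) : ℝ) ^ (k + 1)

/-- The Euler–Frobenius polynomial `E_k` evaluated at a real number `x`. -/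
noncomputable def EF (k : ℕ) (x : ℝ) : ℝ :=
  ∑ s ∈ Finset.range (k + 1), efCoeff k s * x ^ s

/-- `Δ^i 0^m`, the `i`-th forward difference of `γ ↦ γ^m` at `0`. -/
noncomputable def fdiff (i m : ℕ) : ℝ :=
  ∑ α ∈ Finset.range (i + 1), (-1 : ℝ) ^ (i - α) * (Nat.choose i α : ℝ) * (α : ℝ) ^ m

private lemma neg_one_pow_sub (n j : ℕ) (hj : j ≤ n) :
    ((-1 : ℝ)) ^ (n - j) = (-1) ^ n * (-1) ^ j := by
  have h1 : ((-1 : ℝ)) ^ (n - j) * (-1) ^ j = (-1) ^ n := by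
    rw [← pow_add, Nat.sub_add_cancel hj]
  have h2 : ((-1 : ℝ)) ^ j * (-1) ^ j = 1 := by
    rw [← pow_add, ← two_mul, pow_mul]; norm_num
  calc ((-1 : ℝ)) ^ (n - j) = (-1) ^ (n - j) * ((-1) ^ j * (-1) ^ j) := by rw [h2, mul_one]
    _ = ((-1 : ℝ)) ^ (n - j) * (-1) ^ j * (-1) ^ j := by ring
    _ = (-1) ^ n * (-1) ^ j := by rw [h1]

private lemma fwdDiff_pow_expand (h : ℝ) (t : ℕ) :
    Δ_[h] (fun x : ℝ => x ^ t) =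
      ∑ i ∈ Finset.range t, (((t.choose i : ℝ) * h ^ (t - i)) • fun x : ℝ => x ^ i) := by
  funext x
  simp only [fwdDiff, Finset.sum_apply, Pi.smul_apply, smul_eq_mul]
  rw [add_pow]
  rw [Finset.sum_range_succ]
  simp only [Nat.choose_self, Nat.sub_self, pow_zero, Nat.cast_one, mul_one, one_mul]
  rw [add_sub_cancel_right]
  apply Finset.sum_congr rfl
  intro i _
  ring

private lemma fwdDiff_iter_pow_zero (h : ℝ) :
    ∀ t n : ℕ, t < n → (fwdDiff h)^[n] (fun x : ℝ => x ^ t) = 0 := by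
  intro t
  induction t using Nat.strong_induction_on with
  | _ t IH =>
    intro n hn
    obtain ⟨n', rfl⟩ : ∃ n', n = n' + 1 := ⟨n - 1, by omega⟩
    rw [Function.iterate_succ_apply, fwdDiff_pow_expand]
    rw [fwdDiff_iter_finset_sum]
    apply Finset.sum_eq_zero
    intro i hi
    have hi' := Finset.mem_range.mp hi
    rw [fwdDiff_iter_const_smul, IH i hi' n' (by omega), smul_zero]

private lemma key_vanish (m : ℕ) (x : ℝ) :
    ∑ j ∈ Finset.range (m + 2), (-1 : ℝ) ^ j * ((m + 1).choose j : ℝ) * (x - j) ^ m = 0 := by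
  have h0 := fwdDiff_iter_pow_zero (-1 : ℝ) m (m + 1) (by omega)
  have h1 := fwdDiff_iter_eq_sum_shift (-1 : ℝ) (fun x : ℝ => x ^ m) (m + 1) x
  rw [h0] at h1
  have h2 : ∀ j ∈ Finset.range (m + 2),
      (((-1 : ℤ) ^ (m + 1 - j) * ((m + 1).choose j : ℤ)) • (x + j • (-1 : ℝ)) ^ m)
        = (-1 : ℝ) ^ (m+1) * ((-1 : ℝ) ^ j * ((m + 1).choose j : ℝ) * (x - j) ^ m) := by
    intro j hj
    have hj' : j ≤ m + 1 := by simpa using Nat.lt_succ_iff.mp (Finset.mem_range.mp hj)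
    have : (x + j • (-1 : ℝ)) = x - j := by
      rw [nsmul_eq_mul]; ring
    rw [this, zsmul_eq_mul]
    push_cast
    rw [neg_one_pow_sub (m+1) j hj']
    ring
  rw [Finset.sum_congr rfl h2, ← Finset.mul_sum] at h1
  have hne : ((-1 : ℝ)) ^ (m + 1) ≠ 0 := by positivity
  exact (mul_eq_zero.mp h1.symm).resolve_left hne

private lemma fdiff_eq_fwdDiff (i m : ℕ) :
    fdiff i m = (fwdDiff (1 : ℝ))^[i] (fun x : ℝ => x ^ m) 0 := by
  rw [fwdDiff_iter_eq_sum_shift, fdiff]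
  apply Finset.sum_congr rfl
  intro α _
  rw [zsmul_eq_mul]
  have : ((0 : ℝ) + α • (1 : ℝ)) = (α : ℝ) := by
    rw [nsmul_eq_mul]; ring
  rw [this]
  push_cast
  ring

private lemma fwdDiff_iter_pow_self (t : ℕ) :
    (fwdDiff (1 : ℝ))^[t] (fun x : ℝ => x ^ t) = fun _ => (t.factorial : ℝ) := by
  induction t with
  | zero => funext x; simp
  | succ t IH =>
    rw [Function.iterate_succ_apply, fwdDiff_pow_expand]
    rw [fwdDiff_iter_finset_sum]
    rw [Finset.sum_range_succ]
    have h1 : ∀ i ∈ Finset.range t,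
        (fwdDiff (1:ℝ))^[t] ((((t+1).choose i : ℝ) * (1:ℝ) ^ (t + 1 - i)) • fun x : ℝ => x ^ i)
          = 0 := by
      intro i hi
      have hi' := Finset.mem_range.mp hi
      rw [fwdDiff_iter_const_smul, fwdDiff_iter_pow_zero (1:ℝ) i t hi', smul_zero]
    rw [Finset.sum_congr rfl h1]
    funext x
    simp only [Finset.sum_apply, Pi.zero_apply, Finset.sum_const_zero, Pi.add_apply, zero_add,
      fwdDiff_iter_const_smul, IH]
    simp [Nat.choose_succ_self_right, Nat.factorial_succ]

private lemma fdiff_self (m : ℕ) : fdiff m m = (m.factorial : ℝ) := by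
  rw [fdiff_eq_fwdDiff, fwdDiff_iter_pow_self]

/-- Per-α binomial recurrence identity. -/
private lemma per_alpha (q : ℝ) (a : ℕ) :
    ∀ r : ℕ, ∑ u ∈ Finset.range (r + 1), (-1 : ℝ) ^ u * ((a + u).choose u : ℝ) * (q - 1) ^ (r - u)
      = ∑ w ∈ Finset.range (r + 1), (-1 : ℝ) ^ w * ((a + r + 1).choose w : ℝ) * q ^ (r - w) := by
  intro r
  induction r with
  | zero => simp
  | succ r IH =>
    have hL : ∑ u ∈ Finset.range (r + 2),
        (-1 : ℝ) ^ u * ((a + u).choose u : ℝ) * (q - 1) ^ (r + 1 - u)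
        = (q - 1) * (∑ u ∈ Finset.range (r + 1),
            (-1 : ℝ) ^ u * ((a + u).choose u : ℝ) * (q - 1) ^ (r - u))
          + (-1) ^ (r + 1) * ((a + r + 1).choose (r + 1) : ℝ) := by
      rw [Finset.sum_range_succ, Nat.sub_self, pow_zero, mul_one, Finset.mul_sum]
      congr 1
      apply Finset.sum_congr rfl
      intro u hu
      have hu' := Finset.mem_range.mp hu
      have : r + 1 - u = (r - u) + 1 := by omega
      rw [this, pow_succ]
      ring
    -- B = full sum with top index a+r+1 up to r+2 terms
    have hB : ∑ w ∈ Finset.range (r + 2), (-1 : ℝ) ^ w * ((a + r + 1).choose w : ℝ) * q ^ (r + 1 - w)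
        = q * (∑ w ∈ Finset.range (r + 1), (-1 : ℝ) ^ w * ((a + r + 1).choose w : ℝ) * q ^ (r - w))
          + (-1) ^ (r + 1) * ((a + r + 1).choose (r + 1) : ℝ) := by
      rw [Finset.sum_range_succ, Nat.sub_self, pow_zero, mul_one, Finset.mul_sum]
      congr 1
      apply Finset.sum_congr rfl
      intro w hw
      have hw' := Finset.mem_range.mp hw
      have : r + 1 - w = (r - w) + 1 := by omega
      rw [this, pow_succ]
      ring
    have hR : ∑ w ∈ Finset.range (r + 2),
        (-1 : ℝ) ^ w * ((a + (r + 1) + 1).choose w : ℝ) * q ^ (r + 1 - w)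
        = (∑ w ∈ Finset.range (r + 2), (-1 : ℝ) ^ w * ((a + r + 1).choose w : ℝ) * q ^ (r + 1 - w))
          - (∑ w ∈ Finset.range (r + 1),
              (-1 : ℝ) ^ w * ((a + r + 1).choose w : ℝ) * q ^ (r - w)) := by
      rw [Finset.sum_range_succ', Finset.sum_range_succ' (n := r + 1)
        (f := fun w => (-1 : ℝ) ^ w * ((a + r + 1).choose w : ℝ) * q ^ (r + 1 - w))]
      have hch : ∀ w : ℕ, ((a + (r + 1) + 1).choose (w + 1) : ℝ)
          = ((a + r + 1).choose (w + 1) : ℝ) + ((a + r + 1).choose w : ℝ) := by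
        intro w
        have : a + (r + 1) + 1 = (a + r + 1) + 1 := by omega
        rw [this, Nat.choose_succ_succ' (a + r + 1) w]
        push_cast; ring
      simp only [hch, Nat.succ_sub_succ, Nat.choose_zero_right, Nat.cast_one, pow_zero, one_mul,
        Nat.sub_zero]
      have hsplit : ∀ x ∈ Finset.range (r + 1),
          (-1 : ℝ) ^ (x + 1) * (((a + r + 1).choose (x + 1) : ℝ) + ((a + r + 1).choose x : ℝ))
            * q ^ (r - x)
          = (-1 : ℝ) ^ (x + 1) * ((a + r + 1).choose (x + 1) : ℝ) * q ^ (r - x)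
            - (-1 : ℝ) ^ x * ((a + r + 1).choose x : ℝ) * q ^ (r - x) := by
        intro x _
        ring
      rw [Finset.sum_congr rfl hsplit, Finset.sum_sub_distrib]
      ring
    rw [hL, IH, hR, hB]
    ring

private lemma b_eq_a (k s : ℕ) (hs : s ≤ k) :
    ∑ j ∈ Finset.range (k + 1 - s + 1),
      (-1 : ℝ) ^ j * ((k + 2).choose j : ℝ) * ((k + 1 - s - j : ℕ) : ℝ) ^ (k + 1)
    = efCoeff k s := by
  have hkv := key_vanish (k + 1) ((s : ℝ) + 1)
  rw [Finset.range_eq_Ico, ← Finset.sum_Ico_consecutive _ (Nat.zero_le (s + 1))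
    (by omega : s + 1 ≤ k + 1 + 2)] at hkv
  have h1 : ∑ j ∈ Finset.Ico 0 (s + 1),
      (-1 : ℝ) ^ j * ((k + 1 + 1).choose j : ℝ) * (((s : ℝ) + 1) - j) ^ (k + 1)
      = efCoeff k s := by
    rw [← Finset.range_eq_Ico, efCoeff]
    apply Finset.sum_congr rfl
    intro j hj
    have hj' : j ≤ s := by
      have := Finset.mem_range.mp hj; omega
    have hcast : ((s + 1 - j : ℕ) : ℝ) = (s : ℝ) + 1 - j := by
      push_cast [Nat.cast_sub (by omega : j ≤ s + 1)]
      ring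
    rw [hcast]
  have h2 : ∑ j ∈ Finset.Ico (s + 1) (k + 1 + 2),
      (-1 : ℝ) ^ j * ((k + 1 + 1).choose j : ℝ) * (((s : ℝ) + 1) - j) ^ (k + 1)
      = - ∑ j ∈ Finset.range (k + 1 - s + 1),
          (-1 : ℝ) ^ j * ((k + 2).choose j : ℝ) * ((k + 1 - s - j : ℕ) : ℝ) ^ (k + 1) := by
    rw [Finset.sum_Ico_eq_sum_range]
    have hn : k + 1 + 2 - (s + 1) = k + 1 - s + 1 := by omega
    rw [hn]
    rw [← Finset.sum_range_reflect
      (fun j => (-1 : ℝ) ^ j * ((k + 2).choose j : ℝ) * ((k + 1 - s - j : ℕ) : ℝ) ^ (k + 1))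
      (k + 1 - s + 1)]
    rw [← Finset.sum_neg_distrib]
    apply Finset.sum_congr rfl
    intro v hv
    have hv' : v ≤ k + 1 - s := by
      have := Finset.mem_range.mp hv; omega
    have e1 : k + 1 - s + 1 - 1 - v = k + 1 - s - v := by omega
    rw [e1]
    have e2 : k + 1 - s - (k + 1 - s - v) = v := by omega
    rw [e2]
    have e3 : (k + 2).choose (k + 1 - s - v) = (k + 2).choose (s + 1 + v) := by
      rw [show k + 1 - s - v = k + 2 - (s + 1 + v) by omega]
      exact Nat.choose_symm (by omega)
    rw [e3]
    have e4 : ((s : ℝ) + 1) - ((s + 1 + v : ℕ) : ℝ) = -(v : ℝ) := by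
      push_cast; ring
    rw [e4]
    have e5 : ((-1 : ℝ)) ^ (k + 1 - s - v) = (-1) ^ (k + 1) * (-1) ^ (s + v) := by
      rw [show k + 1 - s - v = k + 1 - (s + v) by omega]
      exact neg_one_pow_sub (k + 1) (s + v) (by omega)
    rw [e5]
    have e6 : (-(v : ℝ)) ^ (k + 1) = (-1 : ℝ) ^ (k + 1) * (v : ℝ) ^ (k + 1) := by
      rw [neg_pow]
    rw [e6]
    have e7 : ((-1 : ℝ)) ^ (s + 1 + v) = -((-1 : ℝ) ^ (s + v)) := by
      rw [show s + 1 + v = (s + v) + 1 by omega, pow_succ]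
      ring
    rw [e7]
    have e8 : ((-1 : ℝ) ^ (k + 1)) * ((-1 : ℝ) ^ (k + 1)) = 1 := by
      rw [← pow_add, ← two_mul, pow_mul]; norm_num
    have : (k + 1 + 1) = k + 2 := by omega
    rw [this]
    nlinarith [e8]
  rw [h1, h2] at hkv
  linarith

private lemma main_id (k : ℕ) (q : ℝ) :
    ∑ i ∈ Finset.range (k + 2), fdiff i (k + 1) * (q - 1) ^ (k + 1 - i) = EF k q := by
  -- Step 1: expand fdiff and swap sums
  have step1 : ∑ i ∈ Finset.range (k + 2), fdiff i (k + 1) * (q - 1) ^ (k + 1 - i)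
      = ∑ α ∈ Finset.range (k + 2), ∑ i ∈ Finset.Icc α (k + 1),
          (-1 : ℝ) ^ (i - α) * (i.choose α : ℝ) * (α : ℝ) ^ (k + 1) * (q - 1) ^ (k + 1 - i) := by
    simp only [fdiff, Finset.sum_mul]
    rw [Finset.sum_comm' (s := Finset.range (k + 2)) (t := fun i => Finset.range (i + 1))
      (t' := Finset.range (k + 2)) (s' := fun α => Finset.Icc α (k + 1))]
    intro i α
    simp only [Finset.mem_range, Finset.mem_Icc]
    omega
  rw [step1]
  -- Step 2: apply per_alpha to the inner sum
  have step2 : ∀ α ∈ Finset.range (k + 2),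
      ∑ i ∈ Finset.Icc α (k + 1),
          (-1 : ℝ) ^ (i - α) * (i.choose α : ℝ) * (α : ℝ) ^ (k + 1) * (q - 1) ^ (k + 1 - i)
      = ∑ w ∈ Finset.range (k + 1 - α + 1),
          (α : ℝ) ^ (k + 1) * ((-1 : ℝ) ^ w * ((k + 2).choose w : ℝ) * q ^ (k + 1 - α - w)) := by
    intro α hα
    have hα' : α ≤ k + 1 := by have := Finset.mem_range.mp hα; omega
    rw [show Finset.Icc α (k + 1) = Finset.Ico α (k + 2) by exact (Finset.Ico_add_one_right_eq_Icc _ _).symm,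
      Finset.sum_Ico_eq_sum_range]
    have hn : k + 2 - α = k + 1 - α + 1 := by omega
    rw [hn]
    have hterm : ∀ u ∈ Finset.range (k + 1 - α + 1),
        (-1 : ℝ) ^ (α + u - α) * ((α + u).choose α : ℝ) * (α : ℝ) ^ (k + 1)
            * (q - 1) ^ (k + 1 - (α + u))
        = (α : ℝ) ^ (k + 1)
            * ((-1 : ℝ) ^ u * ((α + u).choose u : ℝ) * (q - 1) ^ (k + 1 - α - u)) := by
      intro u hu
      have e1 : α + u - α = u := by omega
      have e2 : k + 1 - (α + u) = k + 1 - α - u := by omega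
      have e3 : (α + u).choose α = (α + u).choose u := by
        have h := Nat.choose_symm (Nat.le_add_left u α)
        rwa [Nat.add_sub_cancel] at h
      rw [e1, e2, e3]
      ring
    rw [Finset.sum_congr rfl hterm, ← Finset.mul_sum, per_alpha q α (k + 1 - α), Finset.mul_sum]
    have e4 : α + (k + 1 - α) + 1 = k + 2 := by omega
    rw [e4]
  rw [Finset.sum_congr rfl step2]
  -- Step 3: swap, reflect, swap back
  have step3 : ∑ α ∈ Finset.range (k + 2), ∑ w ∈ Finset.range (k + 1 - α + 1),
      (α : ℝ) ^ (k + 1) * ((-1 : ℝ) ^ w * ((k + 2).choose w : ℝ) * q ^ (k + 1 - α - w))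
      = ∑ s ∈ Finset.range (k + 2), ∑ w ∈ Finset.range (k + 1 - s + 1),
          ((k + 1 - s - w : ℕ) : ℝ) ^ (k + 1)
            * ((-1 : ℝ) ^ w * ((k + 2).choose w : ℝ) * q ^ s) := by
    rw [Finset.sum_comm' (s := Finset.range (k + 2)) (t := fun α => Finset.range (k + 1 - α + 1))
      (t' := Finset.range (k + 2)) (s' := fun w => Finset.range (k + 1 - w + 1))
      (h := by intro α w; simp only [Finset.mem_range]; omega)]
    conv_rhs => rw [Finset.sum_comm' (s := Finset.range (k + 2))
      (t := fun s => Finset.range (k + 1 - s + 1))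
      (t' := Finset.range (k + 2)) (s' := fun w => Finset.range (k + 1 - w + 1))
      (h := by intro s w; simp only [Finset.mem_range]; omega)]
    apply Finset.sum_congr rfl
    intro w hw
    have hw' : w ≤ k + 1 := by have := Finset.mem_range.mp hw; omega
    rw [← Finset.sum_range_reflect]
    apply Finset.sum_congr rfl
    intro s hs
    have hs' : s ≤ k + 1 - w := by have := Finset.mem_range.mp hs; omega
    have e1 : k + 1 - w + 1 - 1 - s = k + 1 - w - s := by omega
    rw [e1]
    have e2 : k + 1 - (k + 1 - w - s) - w = s := by omega
    rw [e2]
    have e3 : ((k + 1 - w - s : ℕ) : ℝ) = ((k + 1 - s - w : ℕ) : ℝ) := by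
      congr 1; omega
    rw [e3]
  rw [step3]
  -- Step 4: identify coefficients
  rw [Finset.sum_range_succ]
  have hlast : ∑ w ∈ Finset.range (k + 1 - (k + 1) + 1),
      ((k + 1 - (k + 1) - w : ℕ) : ℝ) ^ (k + 1)
        * ((-1 : ℝ) ^ w * ((k + 2).choose w : ℝ) * q ^ (k + 1)) = 0 := by
    simp
  rw [hlast, add_zero, EF]
  apply Finset.sum_congr rfl
  intro s hs
  have hs' : s ≤ k := by have := Finset.mem_range.mp hs; omega
  rw [← b_eq_a k s hs', Finset.sum_mul]
  apply Finset.sum_congr rfl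
  intro w _
  ring

/-- At any real root `q` of the Euler–Frobenius polynomial `E_k` one has
`Σ_{i=1}^{k+1} Δ^i 0^{k+1} / (q−1)^i = 0`. -/
theorem stmt_10 (k : ℕ) (q : ℝ) (hroot : EF k q = 0) :
    ∑ i ∈ Finset.Icc 1 (k + 1), fdiff i (k + 1) / (q - 1) ^ i = 0 := by
  have hq1 : q ≠ 1 := by
    intro hq
    subst hq
    have h1 := main_id k 1
    rw [Finset.sum_range_succ] at h1
    have h2 : ∀ i ∈ Finset.range (k + 1),
        fdiff i (k + 1) * ((1 : ℝ) - 1) ^ (k + 1 - i) = 0 := by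
      intro i hi
      have hi' := Finset.mem_range.mp hi
      rw [sub_self, zero_pow (by omega : k + 1 - i ≠ 0), mul_zero]
    rw [Finset.sum_congr rfl h2, Finset.sum_const_zero, zero_add, Nat.sub_self, pow_zero,
      mul_one, fdiff_self, hroot] at h1
    exact_mod_cast Nat.factorial_ne_zero (k + 1) (by exact_mod_cast h1)
  have hq : q - 1 ≠ 0 := sub_ne_zero.mpr hq1
  have hzero : fdiff 0 (k + 1) = 0 := by
    simp [fdiff]
  have htot : ∑ i ∈ Finset.Icc 1 (k + 1), fdiff i (k + 1) * (q - 1) ^ (k + 1 - i) = 0 := by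
    have h1 := main_id k q
    rw [hroot, Finset.sum_range_succ'] at h1
    rw [show Finset.Icc 1 (k + 1) = Finset.Ico 1 (k + 2) by exact (Finset.Ico_add_one_right_eq_Icc _ _).symm,
      Finset.sum_Ico_eq_sum_range]
    simp only [show k + 2 - 1 = k + 1 from rfl]
    rw [hzero, zero_mul, add_zero] at h1
    rw [← h1]
    apply Finset.sum_congr rfl
    intro i _
    rw [add_comm 1 i]
  have key : ∀ i ∈ Finset.Icc 1 (k + 1),
      fdiff i (k + 1) / (q - 1) ^ i
        = fdiff i (k + 1) * (q - 1) ^ (k + 1 - i) / (q - 1) ^ (k + 1) := by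
    intro i hi
    have hi' := Finset.mem_Icc.mp hi
    rw [div_eq_div_iff (pow_ne_zero _ hq) (pow_ne_zero _ hq)]
    rw [show (q - 1) ^ (k + 1) = (q - 1) ^ (k + 1 - i) * (q - 1) ^ i by
      rw [← pow_add]; congr 1; omega]
    ring
  rw [Finset.sum_congr rfl key, ← Finset.sum_div, htot, zero_div]
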